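/- In a swap equilibrium for the uniform edge destroyer, the graph is either bridgeless or a tree; in fact if it has a bridge it is a star, so its social cost is at most 2(n−1). -/

import Mathlib

attribute [local instance] Classical.propDecidable

/-- The relevance of the edge `e` for the player `v`: the number of vertices
cut off from `v` when `e` is deleted. -/
noncomputable def relE {V : Type*} [Fintype V] (G : SimpleGraph V) (e : Sym2 V)
    (v : V) : ℕ :=
  Nat.card {w : V // ¬ (G.deleteEdges {e}).Reachable v w}

/-- The cost of player `v` under the uniform edge destroyer: the expected
number of vertices cut off from `v` when one edge of `G`, chosen uniformly at
random, is deleted. -/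
noncomputable def costE {V : Type*} [Fintype V] (G : SimpleGraph V) (v : V) : ℝ :=
  (∑ e ∈ G.edgeFinset, (relE G e v : ℝ)) / G.edgeFinset.card

/-- The graph obtained from `G` when player `a` swaps her edge `ab` for the
new edge `ac`. -/
def swapEdge {V : Type*} (G : SimpleGraph V) (a b c : V) : SimpleGraph V :=
  SimpleGraph.fromEdgeSet ((G.edgeSet \ {s(a, b)}) ∪ {s(a, c)})

/-- `G` is a swap equilibrium for the uniform edge destroyer: no player can
strictly decrease her cost by swapping an incident edge for another incident
edge, or by deleting an incident edge (a disconnecting move yields infinite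
cost and is never an improvement). -/
def IsSwapEqEdgeUniform {V : Type*} [Fintype V] (G : SimpleGraph V) : Prop :=
  G.Connected ∧
    (∀ a b c : V, G.Adj a b → ¬ G.Adj a c → a ≠ c →
      (swapEdge G a b c).Connected → costE G a ≤ costE (swapEdge G a b c) a) ∧
    (∀ a b : V, G.Adj a b → (G.deleteEdges {s(a, b)}).Connected →
      costE G a ≤ costE (G.deleteEdges {s(a, b)}) a)

/-! ### Auxiliary lemmas -/

section Aux

open SimpleGraph

variable {V : Type*}

lemma reach_ind {H : SimpleGraph V} {P : V → Prop}
    (step : ∀ a b, P a → H.Adj a b → P b) {x w : V} (h : H.Reachable x w)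
    (base : P x) : P w := by
  obtain ⟨p⟩ := h
  induction p with
  | nil => exact base
  | cons h' p ih => exact ih (step _ _ base h')

lemma reach_transfer {H K : SimpleGraph V} (hadj : ∀ a b, H.Adj a b → K.Reachable a b)
    {x w : V} (h : H.Reachable x w) : K.Reachable x w :=
  reach_ind (P := fun z => K.Reachable x z)
    (fun a b ha hab => ha.trans (hadj a b hab)) h (Reachable.refl x)

lemma reach_mono' {H K : SimpleGraph V} (hadj : ∀ a b, H.Adj a b → K.Adj a b)
    {x w : V} (h : H.Reachable x w) : K.Reachable x w :=
  reach_transfer (fun a b hab => (hadj a b hab).reachable) h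

lemma reach_avoid {H : SimpleGraph V} {p q x w : V} (h : H.Reachable x w) :
    (H.deleteEdges {s(p,q)}).Reachable x w ∨ (H.deleteEdges {s(p,q)}).Reachable x p ∨
      (H.deleteEdges {s(p,q)}).Reachable x q := by
  refine reach_ind (P := fun z => (H.deleteEdges {s(p,q)}).Reachable x z ∨
    (H.deleteEdges {s(p,q)}).Reachable x p ∨ (H.deleteEdges {s(p,q)}).Reachable x q)
    ?_ h (Or.inl (Reachable.refl x))
  intro a b ha hab
  by_cases he : s(a,b) = s(p,q)
  · rcases ha with ha | ha | ha
    · rw [Sym2.eq_iff] at he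
      rcases he with ⟨rfl, rfl⟩ | ⟨rfl, rfl⟩
      · exact Or.inr (Or.inl ha)
      · exact Or.inr (Or.inr ha)
    · exact Or.inr (Or.inl ha)
    · exact Or.inr (Or.inr ha)
  · have hadj : (H.deleteEdges {s(p,q)}).Adj a b := by
      simp only [deleteEdges_adj, Set.mem_singleton_iff]
      exact ⟨hab, he⟩
    rcases ha with ha | ha | ha
    · exact Or.inl (ha.trans hadj.reachable)
    · exact Or.inr (Or.inl ha)
    · exact Or.inr (Or.inr ha)

lemma reach_last {H : SimpleGraph V} {x w : V} (h : H.Reachable x w) (hne : w ≠ x) :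
    ∃ z, H.Reachable x z ∧ H.Adj z w := by
  have : w = x ∨ ∃ z, H.Reachable x z ∧ H.Adj z w := by
    refine reach_ind (P := fun b => b = x ∨ ∃ z, H.Reachable x z ∧ H.Adj z b) ?_ h (Or.inl rfl)
    intro a b ha hab
    refine Or.inr ⟨a, ?_, hab⟩
    rcases ha with rfl | ⟨z, hz, hza⟩
    · exact Reachable.refl a
    · exact hz.trans hza.reachable
  tauto

lemma bridge_not_reachable {G : SimpleGraph V} {u v : V} (h : G.IsBridge s(u,v)) :
    ¬ (G.deleteEdges {s(u,v)}).Reachable u v := by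
  rw [SimpleGraph.isBridge_iff] at h
  exact h

lemma bridge_adj {G : SimpleGraph V} (hc : G.Connected) {u v : V} (h : G.IsBridge s(u,v)) :
    G.Adj u v := by
  by_contra hn
  rw [SimpleGraph.isBridge_iff] at h
  apply h
  refine reach_transfer ?_ (hc.preconnected u v)
  intro a b hab
  refine Adj.reachable ?_
  rw [deleteEdges_adj]
  refine ⟨hab, fun he => hn ?_⟩
  rw [Set.mem_singleton_iff] at he
  have : s(u,v) ∈ G.edgeSet := he ▸ (hab : s(a,b) ∈ G.edgeSet)
  exact this

lemma side_cover {G : SimpleGraph V} (hc : G.Connected) (q p w : V) :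
    (G.deleteEdges {s(q,p)}).Reachable q w ∨ (G.deleteEdges {s(q,p)}).Reachable p w := by
  have h := reach_avoid (H := G) (p := q) (q := p) (hc.preconnected w q)
  rcases h with h | h | h
  · exact Or.inl h.symm
  · exact Or.inl h.symm
  · exact Or.inr h.symm

lemma pendant_only {H : SimpleGraph V} {ℓ p : V} (hp : ∀ z, H.Adj ℓ z → z = p)
    {s : Set (Sym2 V)} (hs : s(ℓ,p) ∈ s) {w : V}
    (h : (H.deleteEdges s).Reachable ℓ w) : w = ℓ := by
  refine reach_ind (P := fun b => b = ℓ) ?_ h rfl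
  intro a b ha hab
  subst ha
  rw [deleteEdges_adj] at hab
  exact absurd (hp b hab.1 ▸ hs) hab.2

lemma pendant_avoid {H : SimpleGraph V} {ℓ p : V} (hp : ∀ z, H.Adj ℓ z → z = p)
    {x w : V} (hx : x ≠ ℓ) (hw : w ≠ ℓ) (h : H.Reachable x w) :
    (H.deleteEdges {s(ℓ,p)}).Reachable x w := by
  rcases reach_avoid (p := ℓ) (q := p) h with h1 | h1 | h1
  · exact h1
  · exact absurd (pendant_only hp (s := {s(ℓ,p)}) rfl h1.symm) hx
  · rcases reach_avoid (p := ℓ) (q := p) h.symm with h2 | h2 | h2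
    · exact h2.symm
    · exact absurd (pendant_only hp (s := {s(ℓ,p)}) rfl h2.symm) hw
    · exact h1.trans h2.symm

lemma relE_eq_ncard [Fintype V] (G : SimpleGraph V) (e : Sym2 V) (v : V) :
    relE G e v = Set.ncard {w : V | ¬ (G.deleteEdges {e}).Reachable v w} := by
  rw [relE, ← Nat.card_coe_set_eq]
  rfl

lemma relE_mono [Fintype V] {G G' : SimpleGraph V} {e e' : Sym2 V} {v : V}
    (h : ∀ w, (G.deleteEdges {e}).Reachable v w → (G'.deleteEdges {e'}).Reachable v w) :
    relE G' e' v ≤ relE G e v := by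
  rw [relE_eq_ncard, relE_eq_ncard]
  exact Set.ncard_le_ncard (fun w hw hr => hw (h w hr)) (Set.toFinite _)

lemma relE_eq_zero [Fintype V] {G : SimpleGraph V} {e : Sym2 V} {v : V}
    (h : ∀ w, (G.deleteEdges {e}).Reachable v w) : relE G e v = 0 := by
  rw [relE_eq_ncard]
  have : {w : V | ¬ (G.deleteEdges {e}).Reachable v w} = ∅ :=
    Set.eq_empty_iff_forall_notMem.2 (fun w hw => hw (h w))
  simp [this]

lemma relE_set_eq [Fintype V] {G G' : SimpleGraph V} {e e' : Sym2 V} {v v' : V}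
    (h : ∀ w, (G.deleteEdges {e}).Reachable v w ↔ (G'.deleteEdges {e'}).Reachable v' w) :
    relE G e v = relE G' e' v' := by
  rw [relE_eq_ncard, relE_eq_ncard]
  congr 1
  ext w
  simp [h w]

lemma swapEdge_adj (G : SimpleGraph V) (a b c x y : V) :
    (swapEdge G a b c).Adj x y ↔
      ((G.Adj x y ∧ s(x,y) ≠ s(a,b)) ∨ (s(x,y) = s(a,c) ∧ x ≠ y)) := by
  unfold swapEdge
  rw [fromEdgeSet_adj]
  constructor
  · rintro ⟨(⟨he, hne⟩ | he), hxy⟩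
    · exact Or.inl ⟨he, by simpa using hne⟩
    · exact Or.inr ⟨by simpa using he, hxy⟩
  · rintro (⟨he, hne⟩ | ⟨he, hxy⟩)
    · exact ⟨Or.inl ⟨he, by simpa using hne⟩, he.ne⟩
    · exact ⟨Or.inr (by simpa using he), hxy⟩

lemma swapEdge_edgeSet {G : SimpleGraph V} {a b c : V} (hac : a ≠ c) :
    (swapEdge G a b c).edgeSet = (G.edgeSet \ {s(a, b)}) ∪ {s(a, c)} := by
  unfold swapEdge
  rw [edgeSet_fromEdgeSet]
  ext e
  simp only [Set.mem_diff, Set.mem_union, Set.mem_singleton_iff, Set.mem_setOf_eq]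
  constructor
  · tauto
  · rintro (⟨he, hne⟩ | rfl)
    · refine ⟨Or.inl ⟨he, hne⟩, ?_⟩
      exact SimpleGraph.not_isDiag_of_mem_edgeSet G he
    · exact ⟨Or.inr rfl, by simp [Sym2.mk_isDiag_iff, hac]⟩

lemma swapEdge_edgeFinset [Fintype V] {G : SimpleGraph V} {a b c : V} (hac : a ≠ c) :
    (swapEdge G a b c).edgeFinset = insert s(a,c) (G.edgeFinset.erase s(a,b)) := by
  ext e
  rw [mem_edgeFinset, swapEdge_edgeSet hac]
  simp only [Set.mem_union, Set.mem_diff, Set.mem_singleton_iff, Finset.mem_insert,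
    Finset.mem_erase, mem_edgeFinset]
  tauto

lemma swapEdge_card [Fintype V] {G : SimpleGraph V} {a b c : V} (hab : G.Adj a b)
    (hnac : ¬ G.Adj a c) (hac : a ≠ c) :
    (swapEdge G a b c).edgeFinset.card = G.edgeFinset.card := by
  rw [swapEdge_edgeFinset hac, Finset.card_insert_of_notMem, Finset.card_erase_of_mem,
    Nat.sub_add_cancel]
  · exact Finset.card_pos.2 ⟨s(a,b), by simpa [mem_edgeFinset] using hab⟩
  · simpa [mem_edgeFinset] using hab
  · intro h
    exact hnac (by simpa [mem_edgeFinset] using (Finset.mem_of_mem_erase h))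

lemma not_swap_improve [Fintype V] {G : SimpleGraph V} (hse : IsSwapEqEdgeUniform G)
    {a b c : V} (hab : G.Adj a b) (hnac : ¬ G.Adj a c) (hac : a ≠ c)
    (hconn : (swapEdge G a b c).Connected)
    (hsum : (∑ e ∈ (swapEdge G a b c).edgeFinset, relE (swapEdge G a b c) e a) <
      ∑ e ∈ G.edgeFinset, relE G e a) : False := by
  have hle := hse.2.1 a b c hab hnac hac hconn
  have hm : (0:ℝ) < G.edgeFinset.card := by
    have : s(a,b) ∈ G.edgeFinset := by simpa [mem_edgeFinset] using hab
    exact_mod_cast Finset.card_pos.2 ⟨_, this⟩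
  have hlt : costE (swapEdge G a b c) a < costE G a := by
    unfold costE
    rw [swapEdge_card hab hnac hac]
    apply div_lt_div_of_pos_right ?_ hm
    exact_mod_cast hsum
  exact absurd hle (not_le.2 hlt)

end Aux
section Aux2

open SimpleGraph

variable {V : Type*}

/-- If `s(q,p)` is a bridge and `u` is a neighbour of `q` on the `q`-side, then in a
swap equilibrium the edge `uq` must also be a bridge. -/
lemma main_A [Fintype V] {G : SimpleGraph V} (hse : IsSwapEqEdgeUniform G)
    {q p u : V} (hb : G.IsBridge s(q,p))
    (huB : (G.deleteEdges {s(q,p)}).Reachable q u)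
    (hadj : G.Adj u q) : G.IsBridge s(u,q) := by
  by_contra hnb
  have hConn := hse.1
  have hbr : ¬ (G.deleteEdges {s(q,p)}).Reachable q p := bridge_not_reachable hb
  have hqp : G.Adj q p := bridge_adj hse.1 hb
  have hup_ne : u ≠ p := fun h => hbr (h ▸ huB)
  have huq_ne : u ≠ q := hadj.ne
  have hqp_ne : q ≠ p := hqp.ne
  have hsym_upqp : s(u,p) ≠ s(q,p) := by
    intro hc
    rw [Sym2.eq_iff] at hc
    rcases hc with ⟨h1, h2⟩ | ⟨h1, h2⟩
    · exact huq_ne h1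
    · exact hup_ne h1
  have hsym_qpuq : s(q,p) ≠ s(u,q) := by
    intro hc
    rw [Sym2.eq_iff] at hc
    rcases hc with ⟨h1, h2⟩ | ⟨h1, h2⟩
    · exact huq_ne h1.symm
    · exact hup_ne h2.symm
  have hnadj_up : ¬ G.Adj u p := by
    intro h
    refine hbr (huB.trans (Adj.reachable ?_))
    rw [deleteEdges_adj]
    exact ⟨h, by simpa using hsym_upqp⟩
  set G' := swapEdge G u q p with hG'
  -- the new edge
  have hG'up : G'.Adj u p := by
    rw [hG', swapEdge_adj]
    exact Or.inr ⟨rfl, hup_ne⟩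
  have hG'left : ∀ x y, G.Adj x y → s(x,y) ≠ s(u,q) → G'.Adj x y := by
    intro x y h1 h2
    rw [hG', swapEdge_adj]
    exact Or.inl ⟨h1, h2⟩
  -- connectivity of G' minus the old bridge
  set K : SimpleGraph V := G'.deleteEdges {s(q,p)} with hK
  have hKup : K.Adj u p := by
    rw [hK, deleteEdges_adj]
    exact ⟨hG'up, by simpa using hsym_upqp⟩
  have hKuq : K.Reachable u q := by
    have huqR : (G.deleteEdges {s(u,q)}).Reachable u q := by
      rw [SimpleGraph.isBridge_iff] at hnb
      push_neg at hnb
      exact hnb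
    have hmono : ∀ a b, ((G.deleteEdges {s(u,q)}).deleteEdges {s(q,p)}).Adj a b → K.Adj a b := by
      intro a b h1
      rw [deleteEdges_adj, deleteEdges_adj] at h1
      rw [hK, deleteEdges_adj]
      exact ⟨hG'left a b h1.1.1 (by simpa using h1.1.2), h1.2⟩
    rcases reach_avoid (p := q) (q := p) huqR with h1 | h1 | h1
    · exact reach_mono' hmono h1
    · exact reach_mono' hmono h1
    · -- u reaches p avoiding both uq and qp: contradiction with bridge
      exfalso
      have : (G.deleteEdges {s(q,p)}).Reachable u p := by
        refine reach_mono' ?_ h1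
        intro a b h2
        rw [deleteEdges_adj, deleteEdges_adj] at h2
        rw [deleteEdges_adj]
        exact ⟨h2.1.1, h2.2⟩
      exact hbr (huB.trans this)
  have hKmono : ∀ a b, ((G.deleteEdges {s(q,p)}).deleteEdges {s(u,q)}).Adj a b → K.Adj a b := by
    intro a b h1
    rw [deleteEdges_adj, deleteEdges_adj] at h1
    rw [hK, deleteEdges_adj]
    exact ⟨hG'left a b h1.1.1 (by simpa using h1.2), h1.1.2⟩
  have hKall : ∀ w, K.Reachable u w := by
    intro w
    rcases side_cover hConn q p w with h1 | h1
    · rcases reach_avoid (p := u) (q := q) h1.symm with h2 | h2 | h2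
      · exact hKuq.trans (reach_mono' hKmono h2).symm
      · exact (reach_mono' hKmono h2).symm
      · exact hKuq.trans (reach_mono' hKmono h2).symm
    · rcases reach_avoid (p := u) (q := q) h1.symm with h2 | h2 | h2
      · exact (hKup.reachable).trans (reach_mono' hKmono h2).symm
      · exact (reach_mono' hKmono h2).symm
      · exact hKuq.trans (reach_mono' hKmono h2).symm
  have hG'conn : G'.Connected := by
    have hne : Nonempty V := hConn.nonempty
    refine ⟨fun x y => ?_⟩
    have hx : G'.Reachable u x :=
      reach_mono' (fun a b h => by rw [hK, deleteEdges_adj] at h; exact h.1) (hKall x)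
    have hy : G'.Reachable u y :=
      reach_mono' (fun a b h => by rw [hK, deleteEdges_adj] at h; exact h.1) (hKall y)
    exact hx.symm.trans hy
  -- now the cost comparison
  have huqE : s(u,q) ∈ G.edgeFinset := by simpa [mem_edgeFinset] using hadj
  have hqpE : s(q,p) ∈ G.edgeFinset.erase s(u,q) := by
    refine Finset.mem_erase.2 ⟨hsym_qpuq, ?_⟩
    simpa [mem_edgeFinset] using hqp
  have hEq : G'.deleteEdges {s(u,p)} = G.deleteEdges {s(u,q)} := by
    ext x y
    rw [deleteEdges_adj, deleteEdges_adj, hG', swapEdge_adj]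
    constructor
    · rintro ⟨h1 | h1, h2⟩
      · exact ⟨h1.1, by simpa using h1.2⟩
      · exact absurd h1.1 (by simpa using h2)
    · rintro ⟨h1, h2⟩
      have hxyup : s(x,y) ≠ s(u,p) := by
        intro hc
        rw [Sym2.eq_iff] at hc
        rcases hc with ⟨rfl, rfl⟩ | ⟨rfl, rfl⟩
        · exact hnadj_up h1
        · exact hnadj_up h1.symm
      exact ⟨Or.inl ⟨h1, by simpa using h2⟩, by simpa using hxyup⟩
  have hterm1 : relE G' s(u,p) u = relE G s(u,q) u := by
    exact relE_set_eq (fun w => by rw [hEq])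
  have hle_all : ∀ e ∈ G.edgeFinset.erase s(u,q), relE G' e u ≤ relE G e u := by
    intro e he
    by_cases heqp : e = s(q,p)
    · subst heqp
      have hz : relE G' s(q,p) u = 0 := relE_eq_zero (fun w => hKall w)
      rw [hz]
      exact Nat.zero_le _
    · refine relE_mono (fun w hw => ?_)
      refine reach_transfer ?_ hw
      intro a b h1
      rw [deleteEdges_adj] at h1
      by_cases h2 : s(a,b) = s(u,q)
      · -- reroute via u-p-q
        have hpath : (G'.deleteEdges {e}).Reachable u q := by
          have e1 : (G'.deleteEdges {e}).Adj u p := by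
            rw [deleteEdges_adj]
            refine ⟨hG'up, ?_⟩
            have : e ∈ G.edgeSet := by
              have := Finset.mem_of_mem_erase he
              rwa [mem_edgeFinset] at this
            simp only [Set.mem_singleton_iff]
            intro hc
            rw [← hc] at this
            rw [SimpleGraph.mem_edgeSet] at this
            exact hnadj_up this
          have e2 : (G'.deleteEdges {e}).Adj p q := by
            rw [deleteEdges_adj]
            refine ⟨hG'left p q hqp.symm ?_, ?_⟩
            · intro hc
              rw [Sym2.eq_iff] at hc
              rcases hc with ⟨h3, h4⟩ | ⟨h3, h4⟩
              · exact hup_ne h3.symm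
              · exact hqp_ne h3.symm
            · simp only [Set.mem_singleton_iff]
              intro hc
              apply heqp
              rw [← hc, Sym2.eq_swap]
          exact e1.reachable.trans e2.reachable
        rw [Sym2.eq_iff] at h2
        rcases h2 with ⟨rfl, rfl⟩ | ⟨rfl, rfl⟩
        · exact hpath
        · exact hpath.symm
      · refine Adj.reachable ?_
        rw [deleteEdges_adj]
        exact ⟨hG'left a b h1.1 h2, h1.2⟩
  have hstrict : relE G' s(q,p) u < relE G s(q,p) u := by
    have hz : relE G' s(q,p) u = 0 := relE_eq_zero (fun w => hKall w)
    rw [hz, relE_eq_ncard]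
    rw [Set.ncard_pos (Set.toFinite _)]
    refine ⟨p, ?_⟩
    simp only [Set.mem_setOf_eq]
    intro h
    exact hbr (huB.trans h)
  -- assemble the sums
  have hsum : (∑ e ∈ G'.edgeFinset, relE G' e u) < ∑ e ∈ G.edgeFinset, relE G e u := by
    rw [hG', swapEdge_edgeFinset hup_ne, ← hG']
    have hnotmem : s(u,p) ∉ G.edgeFinset.erase s(u,q) := by
      intro h
      have := Finset.mem_of_mem_erase h
      rw [mem_edgeFinset, SimpleGraph.mem_edgeSet] at this
      exact hnadj_up this
    rw [Finset.sum_insert hnotmem]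
    rw [← Finset.add_sum_erase _ _ huqE]
    have hlt : (∑ e ∈ G.edgeFinset.erase s(u,q), relE G' e u) <
        ∑ e ∈ G.edgeFinset.erase s(u,q), relE G e u :=
      Finset.sum_lt_sum hle_all ⟨s(q,p), hqpE, hstrict⟩
    rw [hterm1]
    exact Nat.add_lt_add_left hlt _
  exact not_swap_improve hse hadj hnadj_up hup_ne hG'conn hsum
end Aux2
section Aux3

open SimpleGraph

variable {V : Type*}

/-- In a swap equilibrium, inside any "territory" `S` containing a bridge side, there is
a pendant vertex that is itself a full bridge side. -/
lemma exists_pendant_in [Fintype V] {G : SimpleGraph V} (hse : IsSwapEqEdgeUniform G)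
    {S : Set V} {q0 p0 : V} (hb0 : G.IsBridge s(q0,p0))
    (hsub0 : {w | (G.deleteEdges {s(q0,p0)}).Reachable q0 w} ⊆ S) :
    ∃ ℓ pp : V, G.IsBridge s(ℓ,pp) ∧ ℓ ∈ S ∧ (∀ z, G.Adj ℓ z → z = pp) := by
  classical
  set T : Set ℕ := {k | ∃ q p : V, G.IsBridge s(q,p) ∧
      {w | (G.deleteEdges {s(q,p)}).Reachable q w} ⊆ S ∧
      ({w | (G.deleteEdges {s(q,p)}).Reachable q w}).ncard = k} with hT
  have hTne : T.Nonempty := ⟨_, q0, p0, hb0, hsub0, rfl⟩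
  obtain ⟨q, p, hb, hsub, hcard⟩ := Nat.sInf_mem hTne
  set B : Set V := {w | (G.deleteEdges {s(q,p)}).Reachable q w} with hB
  have hbr : ¬ (G.deleteEdges {s(q,p)}).Reachable q p := bridge_not_reachable hb
  have hqB : q ∈ B := Reachable.refl q
  -- claim : B = {q}
  have hBsing : ∀ w ∈ B, w = q := by
    by_contra hw
    push_neg at hw
    obtain ⟨w₀, hw₀B, hw₀ne⟩ := hw
    obtain ⟨u, hu1, hu2⟩ := reach_last (Reachable.symm hw₀B) (Ne.symm hw₀ne)
    -- u is a neighbour of q on the B side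
    have huadj : (G.deleteEdges {s(q,p)}).Adj q u := hu2.symm
    have hGuq : G.Adj u q := (deleteEdges_adj.1 huadj).1.symm
    have huB : (G.deleteEdges {s(q,p)}).Reachable q u := huadj.reachable
    have hbruq := main_A hse hb huB hGuq
    have hbruq' : ¬ (G.deleteEdges {s(u,q)}).Reachable u q := bridge_not_reachable hbruq
    set B' : Set V := {w | (G.deleteEdges {s(u,q)}).Reachable u w} with hB'
    have hB'B : B' ⊆ B := by
      intro w hwB'
      rcases reach_avoid (p := q) (q := p) (hwB' : (G.deleteEdges {s(u,q)}).Reachable u w)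
        with h1 | h1 | h1
      · have : (G.deleteEdges {s(q,p)}).Reachable u w := by
          refine reach_mono' ?_ h1
          intro a b h2
          rw [deleteEdges_adj, deleteEdges_adj] at h2
          rw [deleteEdges_adj]
          exact ⟨h2.1.1, h2.2⟩
        exact huB.trans this
      · exfalso
        refine hbruq' (reach_mono' ?_ h1)
        intro a b h2
        rw [deleteEdges_adj, deleteEdges_adj] at h2
        rw [deleteEdges_adj]
        exact ⟨h2.1.1, h2.1.2⟩
      · exfalso
        have : (G.deleteEdges {s(q,p)}).Reachable u p := by
          refine reach_mono' ?_ h1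
          intro a b h2
          rw [deleteEdges_adj, deleteEdges_adj] at h2
          rw [deleteEdges_adj]
          exact ⟨h2.1.1, h2.2⟩
        exact hbr (huB.trans this)
    have hqnB' : q ∉ B' := hbruq'
    have hssub : B' ⊂ B := ⟨hB'B, fun h => hqnB' (h hqB)⟩
    have hlt : B'.ncard < B.ncard := Set.ncard_lt_ncard hssub (Set.toFinite _)
    have hmem : B'.ncard ∈ T := ⟨u, q, hbruq, hB'B.trans hsub, rfl⟩
    have := Nat.sInf_le hmem
    omega
  refine ⟨q, p, hb, hsub hqB, ?_⟩
  intro z hz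
  by_contra hzp
  have hadj' : (G.deleteEdges {s(q,p)}).Adj q z := by
    rw [deleteEdges_adj]
    refine ⟨hz, ?_⟩
    simp only [Set.mem_singleton_iff]
    intro hc
    rw [Sym2.eq_iff] at hc
    rcases hc with ⟨h1, h2⟩ | ⟨h1, h2⟩
    · exact hzp h2
    · exact hzp (h2.trans h1)
  exact absurd (hBsing z hadj'.reachable) hz.ne'
end Aux3
section Aux4

open SimpleGraph

variable {V : Type*}

/-- In a swap equilibrium, if `ℓ` is a pendant vertex attached to `p`, then every
edge incident to `p` is a bridge. -/
lemma main_B [Fintype V] {G : SimpleGraph V} (hse : IsSwapEqEdgeUniform G)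
    {ℓ p : V} (hadjℓ : G.Adj ℓ p) (huniq : ∀ z, G.Adj ℓ z → z = p)
    {u : V} (hup : G.Adj u p) (huℓ : u ≠ ℓ) : G.IsBridge s(u,p) := by
  by_contra hnb
  have hConn := hse.1
  have hℓp_ne : ℓ ≠ p := hadjℓ.ne
  have hu_ne_p : u ≠ p := hup.ne
  have hnadj_uℓ : ¬ G.Adj u ℓ := fun h => hu_ne_p (huniq u h.symm)
  have hR_up : (G.deleteEdges {s(u,p)}).Reachable u p := by
    rw [SimpleGraph.isBridge_iff] at hnb
    push_neg at hnb
    exact hnb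
  have hsym_ℓp_up : s(ℓ,p) ≠ s(u,p) := by
    intro hc
    rw [Sym2.eq_iff] at hc
    rcases hc with ⟨h1, h2⟩ | ⟨h1, h2⟩
    · exact huℓ h1.symm
    · exact hℓp_ne h1
  have hsym_uℓ_ℓp : s(u,ℓ) ≠ s(ℓ,p) := by
    intro hc
    rw [Sym2.eq_iff] at hc
    rcases hc with ⟨h1, h2⟩ | ⟨h1, h2⟩
    · exact huℓ h1
    · exact hu_ne_p h1
  set G' := swapEdge G u p ℓ with hG'
  have hG'uℓ : G'.Adj u ℓ := by
    rw [hG', swapEdge_adj]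
    exact Or.inr ⟨rfl, huℓ⟩
  have hG'left : ∀ x y, G.Adj x y → s(x,y) ≠ s(u,p) → G'.Adj x y := by
    intro x y h1 h2
    rw [hG', swapEdge_adj]
    exact Or.inl ⟨h1, h2⟩
  -- G minus up is connected
  have hG0 : ∀ w, (G.deleteEdges {s(u,p)}).Reachable u w := by
    intro w
    refine reach_transfer ?_ (hConn.preconnected u w)
    intro a b hab
    by_cases h2 : s(a,b) = s(u,p)
    · rw [Sym2.eq_iff] at h2
      rcases h2 with ⟨rfl, rfl⟩ | ⟨rfl, rfl⟩
      · exact hR_up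
      · exact hR_up.symm
    · refine Adj.reachable ?_
      rw [deleteEdges_adj]
      exact ⟨hab, by simpa using h2⟩
  have hG'conn : G'.Connected := by
    have hne : Nonempty V := hConn.nonempty
    have hmono : ∀ a b, (G.deleteEdges {s(u,p)}).Adj a b → G'.Adj a b := by
      intro a b h1
      rw [deleteEdges_adj] at h1
      exact hG'left a b h1.1 (by simpa using h1.2)
    refine ⟨fun x y => ?_⟩
    exact (reach_mono' hmono (hG0 x)).symm.trans (reach_mono' hmono (hG0 y))
  -- the connectivity of G' minus ℓp
  have hKall : ∀ w, (G'.deleteEdges {s(ℓ,p)}).Reachable u w := by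
    have hKuℓ : (G'.deleteEdges {s(ℓ,p)}).Adj u ℓ := by
      rw [deleteEdges_adj]
      exact ⟨hG'uℓ, by simpa using hsym_uℓ_ℓp⟩
    have hKup : (G'.deleteEdges {s(ℓ,p)}).Reachable u p := by
      have h1 : ((G.deleteEdges {s(u,p)}).deleteEdges {s(ℓ,p)}).Reachable u p := by
        refine pendant_avoid ?_ huℓ hℓp_ne.symm hR_up
        intro z hz
        rw [deleteEdges_adj] at hz
        exact huniq z hz.1
      refine reach_mono' ?_ h1
      intro a b h2
      rw [deleteEdges_adj, deleteEdges_adj] at h2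
      rw [deleteEdges_adj]
      exact ⟨hG'left a b h2.1.1 (by simpa using h2.1.2), h2.2⟩
    intro w
    by_cases hwℓ : w = ℓ
    · subst hwℓ
      exact hKuℓ.reachable
    · have h1 : (G.deleteEdges {s(ℓ,p)}).Reachable u w :=
        pendant_avoid huniq huℓ hwℓ (hConn.preconnected u w)
      refine reach_transfer ?_ h1
      intro a b h2
      rw [deleteEdges_adj] at h2
      by_cases h3 : s(a,b) = s(u,p)
      · have hpath : (G'.deleteEdges {s(ℓ,p)}).Reachable u p := hKup
        rw [Sym2.eq_iff] at h3
        rcases h3 with ⟨rfl, rfl⟩ | ⟨rfl, rfl⟩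
        · exact hpath
        · exact hpath.symm
      · refine Adj.reachable ?_
        rw [deleteEdges_adj]
        exact ⟨hG'left a b h2.1 h3, h2.2⟩
  -- cost comparison
  have hupE : s(u,p) ∈ G.edgeFinset := by simpa [mem_edgeFinset] using hup
  have hℓpE : s(ℓ,p) ∈ G.edgeFinset.erase s(u,p) := by
    refine Finset.mem_erase.2 ⟨hsym_ℓp_up, ?_⟩
    simpa [mem_edgeFinset] using hadjℓ
  have hEq : G'.deleteEdges {s(u,ℓ)} = G.deleteEdges {s(u,p)} := by
    ext x y
    rw [deleteEdges_adj, deleteEdges_adj, hG', swapEdge_adj]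
    constructor
    · rintro ⟨h1 | h1, h2⟩
      · exact ⟨h1.1, by simpa using h1.2⟩
      · exact absurd h1.1 (by simpa using h2)
    · rintro ⟨h1, h2⟩
      have hxyuℓ : s(x,y) ≠ s(u,ℓ) := by
        intro hc
        rw [Sym2.eq_iff] at hc
        rcases hc with ⟨rfl, rfl⟩ | ⟨rfl, rfl⟩
        · exact hnadj_uℓ h1
        · exact hnadj_uℓ h1.symm
      exact ⟨Or.inl ⟨h1, by simpa using h2⟩, by simpa using hxyuℓ⟩
  have hterm1 : relE G' s(u,ℓ) u = relE G s(u,p) u :=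
    relE_set_eq (fun w => by rw [hEq])
  have hle_all : ∀ e ∈ G.edgeFinset.erase s(u,p), relE G' e u ≤ relE G e u := by
    intro e he
    by_cases heℓp : e = s(ℓ,p)
    · subst heℓp
      have hz : relE G' s(ℓ,p) u = 0 := relE_eq_zero (fun w => hKall w)
      rw [hz]
      exact Nat.zero_le _
    · refine relE_mono (fun w hw => ?_)
      refine reach_transfer ?_ hw
      intro a b h1
      rw [deleteEdges_adj] at h1
      by_cases h2 : s(a,b) = s(u,p)
      · have hpath : (G'.deleteEdges {e}).Reachable u p := by
          have e1 : (G'.deleteEdges {e}).Adj u ℓ := by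
            rw [deleteEdges_adj]
            refine ⟨hG'uℓ, ?_⟩
            have heE : e ∈ G.edgeSet := by
              have := Finset.mem_of_mem_erase he
              rwa [mem_edgeFinset] at this
            simp only [Set.mem_singleton_iff]
            intro hc
            rw [← hc, SimpleGraph.mem_edgeSet] at heE
            exact hnadj_uℓ heE
          have e2 : (G'.deleteEdges {e}).Adj ℓ p := by
            rw [deleteEdges_adj]
            refine ⟨hG'left ℓ p hadjℓ hsym_ℓp_up, ?_⟩
            simp only [Set.mem_singleton_iff]
            exact fun hc => heℓp hc.symm
          exact e1.reachable.trans e2.reachable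
        rw [Sym2.eq_iff] at h2
        rcases h2 with ⟨rfl, rfl⟩ | ⟨rfl, rfl⟩
        · exact hpath
        · exact hpath.symm
      · refine Adj.reachable ?_
        rw [deleteEdges_adj]
        exact ⟨hG'left a b h1.1 h2, h1.2⟩
  have hstrict : relE G' s(ℓ,p) u < relE G s(ℓ,p) u := by
    have hz : relE G' s(ℓ,p) u = 0 := relE_eq_zero (fun w => hKall w)
    rw [hz, relE_eq_ncard]
    rw [Set.ncard_pos (Set.toFinite _)]
    refine ⟨ℓ, ?_⟩
    simp only [Set.mem_setOf_eq]
    intro h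
    exact huℓ (pendant_only huniq (s := {s(ℓ,p)}) rfl h.symm)
  have hsum : (∑ e ∈ G'.edgeFinset, relE G' e u) < ∑ e ∈ G.edgeFinset, relE G e u := by
    rw [hG', swapEdge_edgeFinset huℓ, ← hG']
    have hnotmem : s(u,ℓ) ∉ G.edgeFinset.erase s(u,p) := by
      intro h
      have := Finset.mem_of_mem_erase h
      rw [mem_edgeFinset, SimpleGraph.mem_edgeSet] at this
      exact hnadj_uℓ this
    rw [Finset.sum_insert hnotmem]
    rw [← Finset.add_sum_erase _ _ hupE]
    have hlt : (∑ e ∈ G.edgeFinset.erase s(u,p), relE G' e u) <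
        ∑ e ∈ G.edgeFinset.erase s(u,p), relE G e u :=
      Finset.sum_lt_sum hle_all ⟨s(ℓ,p), hℓpE, hstrict⟩
    rw [hterm1]
    exact Nat.add_lt_add_left hlt _
  exact not_swap_improve hse hup hnadj_uℓ huℓ hG'conn hsum
end Aux4
section Aux5

open SimpleGraph

variable {V : Type*}

lemma relE_adj_eq [Fintype V] {G : SimpleGraph V} {e : Sym2 V} {x y : V}
    (h : (G.deleteEdges {e}).Adj x y) : relE G e x = relE G e y :=
  relE_set_eq (fun w => ⟨fun r => h.symm.reachable.trans r, fun r => h.reachable.trans r⟩)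

lemma pendant_relE_self [Fintype V] {G : SimpleGraph V} {ℓ p : V}
    (huniq : ∀ z, G.Adj ℓ z → z = p) :
    relE G s(ℓ,p) ℓ = ({w : V | w ≠ ℓ}).ncard := by
  rw [relE_eq_ncard]
  congr 1
  ext w
  simp only [Set.mem_setOf_eq]
  constructor
  · intro h hc
    rw [hc] at h
    exact h (Reachable.refl ℓ)
  · intro h hr
    exact h (pendant_only huniq (s := {s(ℓ,p)}) rfl hr)

lemma pendant_unreach_set {G : SimpleGraph V} (hConn : G.Connected) {ℓ p : V}
    (huniq : ∀ z, G.Adj ℓ z → z = p) {x : V} (hx : x ≠ ℓ) :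
    {w : V | ¬ (G.deleteEdges {s(ℓ,p)}).Reachable x w} = {ℓ} := by
    ext w
    simp only [Set.mem_setOf_eq, Set.mem_singleton_iff]
    constructor
    · intro h
      by_contra hw
      exact h (pendant_avoid huniq hx hw (hConn.preconnected x w))
    · intro hw hr
      rw [hw] at hr
      exact hx (pendant_only huniq (s := {s(ℓ,p)}) rfl hr.symm)

lemma pendant_relE_one [Fintype V] {G : SimpleGraph V} (hConn : G.Connected) {ℓ p : V}
    (huniq : ∀ z, G.Adj ℓ z → z = p) {x : V} (hx : x ≠ ℓ) :
    relE G s(ℓ,p) x = 1 := by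
  rw [relE_eq_ncard, pendant_unreach_set hConn huniq hx, Set.ncard_singleton]

lemma swap_sum_le [Fintype V] {G : SimpleGraph V} (hse : IsSwapEqEdgeUniform G)
    {a b c : V} (hab : G.Adj a b) (hnac : ¬ G.Adj a c) (hac : a ≠ c)
    (hconn : (swapEdge G a b c).Connected) :
    (∑ e ∈ G.edgeFinset, relE G e a) ≤
      ∑ e ∈ (swapEdge G a b c).edgeFinset, relE (swapEdge G a b c) e a := by
  by_contra h
  push_neg at h
  exact not_swap_improve hse hab hnac hac hconn h

lemma swapEdge_pendant_uniq {G : SimpleGraph V} {ℓ p c : V}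
    (huniq : ∀ z, G.Adj ℓ z → z = p) (hc : ℓ ≠ c) :
    ∀ z, (swapEdge G ℓ p c).Adj ℓ z → z = c := by
  intro z hz
  rw [swapEdge_adj] at hz
  rcases hz with ⟨h1, h2⟩ | ⟨h1, h2⟩
  · exact absurd (huniq z h1 ▸ rfl) h2
  · rw [Sym2.eq_iff] at h1
    rcases h1 with ⟨h3, h4⟩ | ⟨h3, h4⟩
    · exact h4
    · exact absurd h3 hc

lemma swap_pendant_conn [Fintype V] {G : SimpleGraph V} (hConn : G.Connected) {ℓ p c : V}
    (huniq : ∀ z, G.Adj ℓ z → z = p) (hc : ℓ ≠ c) :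
    (swapEdge G ℓ p c).Connected := by
  have hne : Nonempty V := hConn.nonempty
  have hℓc : (swapEdge G ℓ p c).Adj ℓ c := by
    rw [swapEdge_adj]
    exact Or.inr ⟨rfl, hc⟩
  have hmono : ∀ a b, (G.deleteEdges {s(ℓ,p)}).Adj a b → (swapEdge G ℓ p c).Adj a b := by
    intro a b h1
    rw [deleteEdges_adj] at h1
    rw [swapEdge_adj]
    exact Or.inl ⟨h1.1, by simpa using h1.2⟩
  have hall : ∀ w, (swapEdge G ℓ p c).Reachable ℓ w := by
    intro w
    by_cases hw : w = ℓ
    · rw [hw]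
    · have h1 : (G.deleteEdges {s(ℓ,p)}).Reachable c w :=
        pendant_avoid huniq (Ne.symm hc) hw (hConn.preconnected c w)
      exact (hℓc.reachable).trans (reach_mono' hmono h1)
  exact ⟨fun x y => (hall x).symm.trans (hall y)⟩

/-- Key identity: after the pendant `ℓ` swaps its edge `ℓp` for `ℓc`, its relevance
for an old edge `e` is computed from reachability from `c` in the original graph. -/
lemma swap_pendant_relE [Fintype V] {G : SimpleGraph V} {ℓ p c : V}
    (hadjℓ : G.Adj ℓ p) (huniq : ∀ z, G.Adj ℓ z → z = p)
    (hnac : ¬ G.Adj ℓ c) (hc : ℓ ≠ c) {e : Sym2 V}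
    (heE : e ∈ G.edgeSet) (heℓp : e ≠ s(ℓ,p)) :
    relE (swapEdge G ℓ p c) e ℓ =
      ({w | ¬ (G.deleteEdges {e}).Reachable c w} \ {ℓ}).ncard := by
  set G1 := swapEdge G ℓ p c with hG1
  have huniq1 : ∀ z, G1.Adj ℓ z → z = c := swapEdge_pendant_uniq huniq hc
  have heℓc : e ≠ s(ℓ,c) := by
    intro hcon
    rw [hcon, SimpleGraph.mem_edgeSet] at heE
    exact hnac heE
  have hadj1 : (G1.deleteEdges {e}).Adj ℓ c := by
    rw [deleteEdges_adj]
    constructor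
    · rw [hG1, swapEdge_adj]
      exact Or.inr ⟨rfl, hc⟩
    · simpa using (Ne.symm heℓc)
  rw [relE_adj_eq hadj1, relE_eq_ncard]
  congr 1
  ext w
  simp only [Set.mem_setOf_eq, Set.mem_diff, Set.mem_singleton_iff]
  have hkey : (G1.deleteEdges {e}).Reachable c w ↔ (w = ℓ ∨ (G.deleteEdges {e}).Reachable c w) := by
    constructor
    · intro hr
      by_cases hw : w = ℓ
      · exact Or.inl hw
      · refine Or.inr ?_
        have h1 : ((G1.deleteEdges {e}).deleteEdges {s(ℓ,c)}).Reachable c w := by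
          refine pendant_avoid ?_ (Ne.symm hc) hw hr
          intro z hz
          rw [deleteEdges_adj] at hz
          exact huniq1 z hz.1
        refine reach_mono' ?_ h1
        intro a b h2
        rw [deleteEdges_adj, deleteEdges_adj] at h2
        rw [deleteEdges_adj]
        obtain ⟨⟨hab1, hab2⟩, hab3⟩ := h2
        rw [hG1, swapEdge_adj] at hab1
        rcases hab1 with ⟨h4, h5⟩ | ⟨h4, h5⟩
        · exact ⟨h4, hab2⟩
        · exact absurd h4 (by simpa using hab3)
    · rintro (hw | hr)
      · rw [hw]
        exact hadj1.symm.reachable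
      · by_cases hw : w = ℓ
        · rw [hw]
          exact hadj1.symm.reachable
        · have h1 : ((G.deleteEdges {e}).deleteEdges {s(ℓ,p)}).Reachable c w := by
            refine pendant_avoid ?_ (Ne.symm hc) hw hr
            intro z hz
            rw [deleteEdges_adj] at hz
            exact huniq z hz.1
          refine reach_mono' ?_ h1
          intro a b h2
          rw [deleteEdges_adj, deleteEdges_adj] at h2
          rw [deleteEdges_adj]
          obtain ⟨⟨hab1, hab2⟩, hab3⟩ := h2
          constructor
          · rw [hG1, swapEdge_adj]
            exact Or.inl ⟨hab1, by simpa using hab3⟩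
          · exact hab2
  rw [hkey]
  tauto

end Aux5
section Aux6

open SimpleGraph

variable {V : Type*}

/-- In a swap equilibrium, every neighbour of the support vertex of a pendant is itself
a pendant attached to that support vertex. -/
lemma main_C [Fintype V] {G : SimpleGraph V} (hse : IsSwapEqEdgeUniform G)
    {ℓ p : V} (hadjℓ : G.Adj ℓ p) (huniq : ∀ z, G.Adj ℓ z → z = p)
    {u : V} (hup : G.Adj u p) (huℓ : u ≠ ℓ) :
    ∀ z, G.Adj u z → z = p := by
  by_contra hcon
  push_neg at hcon
  obtain ⟨z0, hz0, hz0p⟩ := hcon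
  have hConn := hse.1
  have hb := main_B hse hadjℓ huniq hup huℓ
  have hbrup : ¬ (G.deleteEdges {s(u,p)}).Reachable u p := bridge_not_reachable hb
  have hu_ne_p : u ≠ p := hup.ne
  have hℓ_ne_p : ℓ ≠ p := hadjℓ.ne
  have hz0S : (G.deleteEdges {s(u,p)}).Reachable u z0 := by
    refine Adj.reachable ?_
    rw [deleteEdges_adj]
    refine ⟨hz0, ?_⟩
    simp only [Set.mem_singleton_iff]
    intro hc
    rw [Sym2.eq_iff] at hc
    rcases hc with ⟨h1, h2⟩ | ⟨h1, h2⟩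
    · exact hz0p h2
    · exact hu_ne_p h1
  obtain ⟨ℓ₂, p₂, hb₂, hℓ₂S, huniq₂⟩ :=
    exists_pendant_in hse hb
      (S := {w | (G.deleteEdges {s(u,p)}).Reachable u w}) (fun w hw => hw)
  have hadjℓ₂ : G.Adj ℓ₂ p₂ := bridge_adj hse.1 hb₂
  have hℓ₂S' : (G.deleteEdges {s(u,p)}).Reachable u ℓ₂ := hℓ₂S
  have hℓ₂_ne_u : ℓ₂ ≠ u := by
    intro hcon2
    rw [hcon2] at huniq₂
    exact hz0p ((huniq₂ z0 hz0).trans (huniq₂ p hup).symm)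
  have hp₂S : (G.deleteEdges {s(u,p)}).Reachable u p₂ := by
    obtain ⟨z', hz'1, hz'2⟩ := reach_last hℓ₂S' hℓ₂_ne_u
    have hz'p : z' = p₂ := huniq₂ z' ((deleteEdges_adj.1 hz'2).1.symm)
    exact hz'p ▸ hz'1
  have hp_ne_p₂ : p ≠ p₂ := fun h => hbrup (h.symm ▸ hp₂S)
  have hℓ_notS : ¬ (G.deleteEdges {s(u,p)}).Reachable u ℓ := by
    intro hr
    obtain ⟨z', hz'1, hz'2⟩ := reach_last hr (Ne.symm huℓ)
    have hz'p : z' = p := huniq z' ((deleteEdges_adj.1 hz'2).1.symm)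
    exact hbrup (hz'p ▸ hz'1)
  have hℓ_ne_ℓ₂ : ℓ ≠ ℓ₂ := fun h => hℓ_notS (h.symm ▸ hℓ₂S')
  have hℓ_ne_p₂ : ℓ ≠ p₂ := fun h => hℓ_notS (h.symm ▸ hp₂S)
  have hℓ₂_ne_p : ℓ₂ ≠ p := fun h => hbrup (h ▸ hℓ₂S')
  have hℓ₂_ne_p₂ : ℓ₂ ≠ p₂ := hadjℓ₂.ne
  have hnadj_ℓp₂ : ¬ G.Adj ℓ p₂ := fun h => hp_ne_p₂ (huniq p₂ h).symm
  have hnadj_ℓ₂p : ¬ G.Adj ℓ₂ p := fun h => hp_ne_p₂ (huniq₂ p h)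
  have hℓ₂_far : ¬ (G.deleteEdges {s(u,p)}).Reachable p ℓ₂ :=
    fun h => hbrup (hℓ₂S'.trans h.symm)
  -- edge membership and distinctness
  have hℓpE : s(ℓ,p) ∈ G.edgeFinset := by simpa [mem_edgeFinset] using hadjℓ
  have hℓ₂p₂E : s(ℓ₂,p₂) ∈ G.edgeFinset := by simpa [mem_edgeFinset] using hadjℓ₂
  have hupE : s(u,p) ∈ G.edgeFinset := by simpa [mem_edgeFinset] using hup
  have hne_e12 : s(ℓ,p) ≠ s(ℓ₂,p₂) := by
    intro hc
    rw [Sym2.eq_iff] at hc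
    rcases hc with ⟨h1, h2⟩ | ⟨h1, h2⟩
    · exact hℓ_ne_ℓ₂ h1
    · exact hℓ_ne_p₂ h1
  have hup_ne_ℓp : s(u,p) ≠ s(ℓ,p) := by
    intro hc
    rw [Sym2.eq_iff] at hc
    rcases hc with ⟨h1, h2⟩ | ⟨h1, h2⟩
    · exact huℓ h1
    · exact hu_ne_p h1
  have hup_ne_ℓ₂p₂ : s(u,p) ≠ s(ℓ₂,p₂) := by
    intro hc
    rw [Sym2.eq_iff] at hc
    rcases hc with ⟨h1, h2⟩ | ⟨h1, h2⟩
    · exact hℓ₂_ne_u h1.symm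
    · exact hℓ₂_ne_p h2.symm
  -- the two swap inequalities
  have hconn1 := swap_pendant_conn hConn huniq hℓ_ne_p₂
  have hsum1 := swap_sum_le hse hadjℓ hnadj_ℓp₂ hℓ_ne_p₂ hconn1
  have hconn2 := swap_pendant_conn hConn huniq₂ hℓ₂_ne_p
  have hsum2 := swap_sum_le hse hadjℓ₂ hnadj_ℓ₂p hℓ₂_ne_p hconn2
  -- rewrite sum 1
  rw [swapEdge_edgeFinset hℓ_ne_p₂] at hsum1
  have hnot1 : s(ℓ,p₂) ∉ G.edgeFinset.erase s(ℓ,p) := by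
    intro h
    have := Finset.mem_of_mem_erase h
    rw [mem_edgeFinset, SimpleGraph.mem_edgeSet] at this
    exact hnadj_ℓp₂ this
  rw [Finset.sum_insert hnot1] at hsum1
  rw [← Finset.add_sum_erase _ _ hℓpE] at hsum1
  have hhead1 : relE (swapEdge G ℓ p p₂) s(ℓ,p₂) ℓ = relE G s(ℓ,p) ℓ := by
    rw [pendant_relE_self (swapEdge_pendant_uniq huniq hℓ_ne_p₂), pendant_relE_self huniq]
  rw [hhead1] at hsum1
  have hsum1' : (∑ e ∈ G.edgeFinset.erase s(ℓ,p), relE G e ℓ) ≤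
      ∑ e ∈ G.edgeFinset.erase s(ℓ,p), relE (swapEdge G ℓ p p₂) e ℓ := by omega
  -- rewrite sum 2
  rw [swapEdge_edgeFinset hℓ₂_ne_p] at hsum2
  have hnot2 : s(ℓ₂,p) ∉ G.edgeFinset.erase s(ℓ₂,p₂) := by
    intro h
    have := Finset.mem_of_mem_erase h
    rw [mem_edgeFinset, SimpleGraph.mem_edgeSet] at this
    exact hnadj_ℓ₂p this
  rw [Finset.sum_insert hnot2] at hsum2
  rw [← Finset.add_sum_erase _ _ hℓ₂p₂E] at hsum2
  have hhead2 : relE (swapEdge G ℓ₂ p₂ p) s(ℓ₂,p) ℓ₂ = relE G s(ℓ₂,p₂) ℓ₂ := by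
    rw [pendant_relE_self (swapEdge_pendant_uniq huniq₂ hℓ₂_ne_p), pendant_relE_self huniq₂]
  rw [hhead2] at hsum2
  have hsum2' : (∑ e ∈ G.edgeFinset.erase s(ℓ₂,p₂), relE G e ℓ₂) ≤
      ∑ e ∈ G.edgeFinset.erase s(ℓ₂,p₂), relE (swapEdge G ℓ₂ p₂ p) e ℓ₂ := by omega
  -- convert the sums to reachability from p and p₂
  have hLHS1 : ∀ e ∈ G.edgeFinset.erase s(ℓ,p), relE G e ℓ = relE G e p := by
    intro e he
    refine relE_adj_eq ?_
    rw [deleteEdges_adj]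
    refine ⟨hadjℓ, ?_⟩
    simp only [Set.mem_singleton_iff]
    exact fun hc => (Finset.mem_erase.1 he).1 hc.symm
  have hRHS1 : ∀ e ∈ G.edgeFinset.erase s(ℓ,p), relE (swapEdge G ℓ p p₂) e ℓ =
      ({w | ¬ (G.deleteEdges {e}).Reachable p₂ w} \ {ℓ}).ncard := by
    intro e he
    refine swap_pendant_relE hadjℓ huniq hnadj_ℓp₂ hℓ_ne_p₂ ?_ (Finset.mem_erase.1 he).1
    have := Finset.mem_of_mem_erase he
    rwa [mem_edgeFinset] at this
  have hLHS2 : ∀ e ∈ G.edgeFinset.erase s(ℓ₂,p₂), relE G e ℓ₂ = relE G e p₂ := by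
    intro e he
    refine relE_adj_eq ?_
    rw [deleteEdges_adj]
    refine ⟨hadjℓ₂, ?_⟩
    simp only [Set.mem_singleton_iff]
    exact fun hc => (Finset.mem_erase.1 he).1 hc.symm
  have hRHS2 : ∀ e ∈ G.edgeFinset.erase s(ℓ₂,p₂), relE (swapEdge G ℓ₂ p₂ p) e ℓ₂ =
      ({w | ¬ (G.deleteEdges {e}).Reachable p w} \ {ℓ₂}).ncard := by
    intro e he
    refine swap_pendant_relE hadjℓ₂ huniq₂ hnadj_ℓ₂p hℓ₂_ne_p ?_ (Finset.mem_erase.1 he).1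
    have := Finset.mem_of_mem_erase he
    rwa [mem_edgeFinset] at this
  rw [Finset.sum_congr rfl hLHS1, Finset.sum_congr rfl hRHS1] at hsum1'
  rw [Finset.sum_congr rfl hLHS2, Finset.sum_congr rfl hRHS2] at hsum2'
  -- split off the boundary terms
  have hmem12 : s(ℓ₂,p₂) ∈ G.edgeFinset.erase s(ℓ,p) :=
    Finset.mem_erase.2 ⟨Ne.symm hne_e12, hℓ₂p₂E⟩
  have hmem21 : s(ℓ,p) ∈ G.edgeFinset.erase s(ℓ₂,p₂) :=
    Finset.mem_erase.2 ⟨hne_e12, hℓpE⟩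
  rw [← Finset.add_sum_erase _ _ hmem12, ← Finset.add_sum_erase _ _ hmem12] at hsum1'
  rw [← Finset.add_sum_erase _ _ hmem21, ← Finset.add_sum_erase _ _ hmem21] at hsum2'
  -- boundary values
  have hbv1 : relE G s(ℓ₂,p₂) p = 1 := pendant_relE_one hConn huniq₂ (Ne.symm hℓ₂_ne_p)
  have hbv2 : ({w | ¬ (G.deleteEdges {s(ℓ₂,p₂)}).Reachable p₂ w} \ {ℓ}).ncard = 1 := by
    rw [pendant_unreach_set hConn huniq₂ (Ne.symm hℓ₂_ne_p₂),
      Set.diff_singleton_eq_self (by simpa using hℓ_ne_ℓ₂), Set.ncard_singleton]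
  have hbv3 : relE G s(ℓ,p) p₂ = 1 := pendant_relE_one hConn huniq (Ne.symm hℓ_ne_p₂)
  have hbv4 : ({w | ¬ (G.deleteEdges {s(ℓ,p)}).Reachable p w} \ {ℓ₂}).ncard = 1 := by
    rw [pendant_unreach_set hConn huniq (Ne.symm hℓ_ne_p),
      Set.diff_singleton_eq_self (by simpa using Ne.symm hℓ_ne_ℓ₂), Set.ncard_singleton]
  rw [hbv1, hbv2] at hsum1'
  rw [hbv3, hbv4] at hsum2'
  rw [Finset.erase_right_comm] at hsum2'
  -- final contradiction over E₀
  have hY'le : ∀ e ∈ (G.edgeFinset.erase s(ℓ,p)).erase s(ℓ₂,p₂),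
      ({w | ¬ (G.deleteEdges {e}).Reachable p₂ w} \ {ℓ}).ncard ≤ relE G e p₂ := by
    intro e _
    rw [relE_eq_ncard]
    exact Set.ncard_le_ncard Set.diff_subset (Set.toFinite _)
  have hX'le : ∀ e ∈ (G.edgeFinset.erase s(ℓ,p)).erase s(ℓ₂,p₂),
      ({w | ¬ (G.deleteEdges {e}).Reachable p w} \ {ℓ₂}).ncard ≤ relE G e p := by
    intro e _
    rw [relE_eq_ncard]
    exact Set.ncard_le_ncard Set.diff_subset (Set.toFinite _)
  have hupE₀ : s(u,p) ∈ (G.edgeFinset.erase s(ℓ,p)).erase s(ℓ₂,p₂) :=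
    Finset.mem_erase.2 ⟨hup_ne_ℓ₂p₂, Finset.mem_erase.2 ⟨hup_ne_ℓp, hupE⟩⟩
  have hstrict : ({w | ¬ (G.deleteEdges {s(u,p)}).Reachable p w} \ {ℓ₂}).ncard <
      relE G s(u,p) p := by
    rw [relE_eq_ncard]
    exact Set.ncard_diff_singleton_lt_of_mem hℓ₂_far (Set.toFinite _)
  have hX'lt : (∑ e ∈ (G.edgeFinset.erase s(ℓ,p)).erase s(ℓ₂,p₂),
        ({w | ¬ (G.deleteEdges {e}).Reachable p w} \ {ℓ₂}).ncard) <
      ∑ e ∈ (G.edgeFinset.erase s(ℓ,p)).erase s(ℓ₂,p₂), relE G e p :=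
    Finset.sum_lt_sum hX'le ⟨s(u,p), hupE₀, hstrict⟩
  have hY'sum : (∑ e ∈ (G.edgeFinset.erase s(ℓ,p)).erase s(ℓ₂,p₂),
        ({w | ¬ (G.deleteEdges {e}).Reachable p₂ w} \ {ℓ}).ncard) ≤
      ∑ e ∈ (G.edgeFinset.erase s(ℓ,p)).erase s(ℓ₂,p₂), relE G e p₂ :=
    Finset.sum_le_sum hY'le
  omega
end Aux6
section Aux7

open SimpleGraph

variable {V : Type*}

lemma nonbridge_relE_zero [Fintype V] {G : SimpleGraph V} (hConn : G.Connected)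
    {e : Sym2 V} (heE : e ∈ G.edgeSet) (hnb : ¬ G.IsBridge e) (v : V) :
    relE G e v = 0 := by
  induction e using Sym2.ind with
  | _ x y =>
    have hadj : G.Adj x y := heE
    have hr : (G.deleteEdges {s(x,y)}).Reachable x y := by
      rw [SimpleGraph.isBridge_iff] at hnb
      push_neg at hnb
      exact hnb
    refine relE_eq_zero (fun w => ?_)
    refine reach_transfer ?_ (hConn.preconnected v w)
    intro a b hab
    by_cases h2 : s(a,b) = s(x,y)
    · rw [Sym2.eq_iff] at h2
      rcases h2 with ⟨rfl, rfl⟩ | ⟨rfl, rfl⟩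
      · exact hr
      · exact hr.symm
    · refine Adj.reachable ?_
      rw [deleteEdges_adj]
      exact ⟨hab, by simpa using h2⟩

lemma star_edge_sum [Fintype V] {G : SimpleGraph V} (hConn : G.Connected)
    {w p : V} (hadj : G.Adj w p) (hped : ∀ z, G.Adj w z → z = p) :
    (∑ v : V, relE G s(w,p) v) = 2 * (Fintype.card V - 1) := by
  have hN : 1 ≤ Fintype.card V := Fintype.card_pos_iff.2 ⟨w⟩
  have hself : relE G s(w,p) w = Fintype.card V - 1 := by
    rw [pendant_relE_self hped]
    have : {x : V | x ≠ w} = Set.univ \ {w} := by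
      ext x
      simp
    rw [this, Set.ncard_diff_singleton_of_mem (Set.mem_univ w), Set.ncard_univ,
      Nat.card_eq_fintype_card]
  have hothers : ∀ v ∈ Finset.univ.erase w, relE G s(w,p) v = 1 := by
    intro v hv
    exact pendant_relE_one hConn hped (Finset.mem_erase.1 hv).1
  rw [← Finset.add_sum_erase _ _ (Finset.mem_univ w), hself,
    Finset.sum_congr rfl hothers]
  rw [Finset.sum_const, Finset.card_erase_of_mem (Finset.mem_univ w), Finset.card_univ]
  simp only [smul_eq_mul, mul_one]
  omega

end Aux7
/-- A swap equilibrium `G` for the uniform edge destroyer is bridgeless or a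
star, and its social cost is at most `2(n−1)`. -/
theorem stmt_18 {V : Type*} [Fintype V] (G : SimpleGraph V) (n : ℕ)
    (hn : Fintype.card V = n) (hn3 : 3 ≤ n) (hse : IsSwapEqEdgeUniform G) :
    ((∀ e ∈ G.edgeSet, ¬ G.IsBridge e) ∨
        ∃ b : V, (∀ v : V, v ≠ b → G.Adj b v) ∧ ∀ e ∈ G.edgeSet, b ∈ e) ∧
      ∑ v : V, costE G v ≤ 2 * (n - 1) := by
  classical
  have hConn := hse.1
  have hn1R : (3:ℝ) ≤ (n:ℝ) := by exact_mod_cast hn3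
  by_cases hbl : ∀ e ∈ G.edgeSet, ¬ G.IsBridge e
  · refine ⟨Or.inl hbl, ?_⟩
    have hzero : ∀ v : V, costE G v = 0 := by
      intro v
      unfold costE
      have : ∀ e ∈ G.edgeFinset, (relE G e v : ℝ) = 0 := by
        intro e he
        rw [SimpleGraph.mem_edgeFinset] at he
        rw [nonbridge_relE_zero hConn he (hbl e he) v]
        norm_num
      rw [Finset.sum_congr rfl this]
      simp
    rw [Finset.sum_congr rfl (fun v _ => hzero v)]
    rw [Finset.sum_const, smul_zero]
    linarith
  · push_neg at hbl
    obtain ⟨e0, he0E, hbr0⟩ := hbl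
    -- find a pendant vertex whose edge is a bridge
    obtain ⟨q0, p0, rfl⟩ : ∃ q0 p0, e0 = s(q0, p0) := by
      induction e0 using Sym2.ind with
      | _ x y => exact ⟨x, y, rfl⟩
    obtain ⟨ℓ, p, hbℓp, -, huniq⟩ :=
      exists_pendant_in hse hbr0 (S := Set.univ) (fun w _ => Set.mem_univ w)
    have hadjℓ : G.Adj ℓ p := bridge_adj hse.1 hbℓp
    -- every neighbour of p is a pendant vertex attached to p
    have hped : ∀ x, G.Adj p x → ∀ z, G.Adj x z → z = p := by
      intro x hx
      by_cases hxℓ : x = ℓ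
      · subst hxℓ
        exact huniq
      · exact main_C hse hadjℓ huniq hx.symm hxℓ
    -- G is a star with centre p
    have hstar : ∀ v : V, v ≠ p → G.Adj p v := by
      intro v hv
      have hP : v = p ∨ G.Adj p v := by
        refine reach_ind (P := fun z => z = p ∨ G.Adj p z) ?_
          (hConn.preconnected p v) (Or.inl rfl)
        intro a b ha hab
        rcases ha with rfl | ha
        · exact Or.inr hab
        · exact Or.inl (hped a ha b hab)
      rcases hP with rfl | h
      · exact absurd rfl hv
      · exact h
    have hedge : ∀ e ∈ G.edgeSet, p ∈ e := by
      intro e heE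
      induction e using Sym2.ind with
      | _ x y =>
        have hadj : G.Adj x y := heE
        by_cases hxp : x = p
        · rw [Sym2.mem_iff]
          exact Or.inl hxp.symm
        · have := hped x (hstar x hxp) y hadj
          rw [Sym2.mem_iff]
          exact Or.inr this.symm
    refine ⟨Or.inr ⟨p, hstar, hedge⟩, ?_⟩
    -- compute the social cost of the star
    have hesum : ∀ e ∈ G.edgeFinset, (∑ v : V, relE G e v) = 2 * (n - 1) := by
      intro e he
      rw [SimpleGraph.mem_edgeFinset] at he
      rw [← hn]
      induction e using Sym2.ind with
      | _ x y =>
        have hadj : G.Adj x y := he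
        rcases (Sym2.mem_iff.1 (hedge _ he)) with h | h
        · -- x = p, so edge is s(p,y) = s(y,p) with y a pendant
          subst h
          have hyp : y ≠ p := hadj.ne'
          have hy : G.Adj y p := hadj.symm
          rw [Sym2.eq_swap]
          exact star_edge_sum hConn hy (hped y (hstar y hyp))
        · subst h
          have hxp : x ≠ p := hadj.ne
          exact star_edge_sum hConn hadj (hped x (hstar x hxp))
    have hm0 : 0 < G.edgeFinset.card := by
      refine Finset.card_pos.2 ⟨s(ℓ,p), ?_⟩
      simpa [SimpleGraph.mem_edgeFinset] using hadjℓ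
    have hmR : (0:ℝ) < (G.edgeFinset.card : ℝ) := by exact_mod_cast hm0
    have htot : (∑ v : V, costE G v) = 2 * ((n:ℝ) - 1) := by
      unfold costE
      rw [← Finset.sum_div]
      rw [Finset.sum_comm]
      have : ∀ e ∈ G.edgeFinset, (∑ v : V, (relE G e v : ℝ)) = 2 * ((n:ℝ) - 1) := by
        intro e he
        have := hesum e he
        have hcast : ((∑ v : V, relE G e v : ℕ) : ℝ) = 2 * ((n:ℝ) - 1) := by
          rw [this]
          have h1n : 1 ≤ n := by omega
          push_cast [Nat.cast_sub h1n]
          ring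
        rw [← hcast]
        push_cast
        ring
      rw [Finset.sum_congr rfl this, Finset.sum_const, nsmul_eq_mul]
      exact mul_div_cancel_left₀ _ (ne_of_gt hmR)
    rw [htot]
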